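/- If U is a simple extension of a standard finite tree T, then for all a and b in T, the meet of a and b computed in T equals the meet of a and b computed in U. -/

import Mathlib

noncomputable section
open scoped Classical

namespace AKST

/-- The first uncountable ordinal. -/
def ω1 : Ordinal := (Cardinal.aleph 1).ord

/-- The second uncountable ordinal. -/
def ω2 : Ordinal := (Cardinal.aleph 2).ord

/-- The height of a countable ordinal `γ`: the unique `α` with `ω·α ≤ γ < ω·(α+1)`. -/
def ht (γ : Ordinal) : Ordinal := γ / Ordinal.omega0

/-- A standard finite tree. -/
structure SFT where
  elems : Finset Ordinal
  lt : Ordinal → Ordinal → Prop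
  zero_mem : 0 ∈ elems
  mem_ok : ∀ x ∈ elems, x = 0 ∨ (Ordinal.omega0 ≤ x ∧ x < ω1)
  lt_mem : ∀ {x y}, lt x y → x ∈ elems ∧ y ∈ elems
  lt_trans' : ∀ {x y z}, lt x y → lt y z → lt x z
  lt_irrefl' : ∀ x, ¬ lt x x
  pred_linear : ∀ {x y z}, lt y x → lt z x → lt y z ∨ y = z ∨ lt z y
  lt_ht : ∀ {x y}, lt x y → ht x < ht y
  pred_level : ∀ x ∈ elems, ∀ α, (∃ z ∈ elems, ht z = α) → α < ht x →
    ∃ y ∈ elems, ht y = α ∧ lt y x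

namespace SFT

/-- The non-strict tree order. -/
def le (T : SFT) (x y : Ordinal) : Prop := T.lt x y ∨ (x = y ∧ x ∈ T.elems)

/-- `ht[T]`: the set of nonzero heights of elements of `T`. -/
def heights (T : SFT) : Set Ordinal := {α | α ≠ 0 ∧ ∃ x ∈ T.elems, ht x = α}

/-- Level `α` of `T`. -/
def level (T : SFT) (α : Ordinal) : Set Ordinal := {x | x ∈ T.elems ∧ ht x = α}

/-- `max(ht[T])`. -/
def maxHeight (T : SFT) : Ordinal := sSup T.heights

/-- The least element of `ht[T]` greater than `α`. -/
def minAbove (T : SFT) (α : Ordinal) : Ordinal := sInf {β | β ∈ T.heights ∧ α < β}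

/-- The drop-down `x↾α`: the unique element of `T` of height `α` below `x`. -/
def drop (T : SFT) (α x : Ordinal) : Ordinal :=
  if h : ∃ y, y ∈ T.elems ∧ ht y = α ∧ T.lt y x then h.choose else 0

/-- `z` is the meet of `x` and `y` in `T`. -/
def isMeet (T : SFT) (x y z : Ordinal) : Prop :=
  T.le z x ∧ T.le z y ∧ ∀ w, T.le w x → T.le w y → T.le w z

/-- The meet `x ∧_T y`. -/
def meet (T : SFT) (x y : Ordinal) : Ordinal :=
  if h : ∃ z, T.isMeet x y z then h.choose else 0

/-- `U` extends `T`. -/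
def Ext (T U : SFT) : Prop :=
  (↑T.elems : Set Ordinal) ⊆ ↑U.elems ∧ ∀ {x y}, T.lt x y → U.lt x y

/-- `X` has unique drop-downs to `α` in `T`. -/
def UniqueDrops (T : SFT) (α : Ordinal) (X : Set Ordinal) : Prop :=
  ∀ x ∈ X, ∀ y ∈ X, T.drop α x = T.drop α y → x = y

/-- `U` is a simple extension of `T`. -/
def SimpleExt (U T : SFT) : Prop :=
  Ext T U ∧
  (∀ x ∈ U.elems, x ∉ T.elems → ht x ∉ T.heights) ∧
  (∀ α, α ∈ U.heights → α ∉ T.heights → α < T.maxHeight →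
     U.UniqueDrops α (T.level (T.minAbove α)))

/-- `x` and `y` are incomparable in `T`. -/
def Incomp (T : SFT) (x y : Ordinal) : Prop := x ≠ y ∧ ¬ T.lt x y ∧ ¬ T.lt y x

/-- `T` is normal: every element has successors at every higher occupied level. -/
def Normal (T : SFT) : Prop :=
  ∀ x ∈ T.elems, ∀ γ ∈ T.heights, ht x < γ → ∃ y ∈ T.elems, ht y = γ ∧ T.lt x y

end SFT

/-! Partial functions on a tree, represented by their graphs. -/

def dom (f : Set (Ordinal × Ordinal)) : Set Ordinal := {x | ∃ y, (x, y) ∈ f}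

def ran (f : Set (Ordinal × Ordinal)) : Set Ordinal := {y | ∃ x, (x, y) ∈ f}

/-- The graph is single-valued. -/
def FuncGraph (f : Set (Ordinal × Ordinal)) : Prop :=
  ∀ {x y y'}, (x, y) ∈ f → (x, y') ∈ f → y = y'

/-- The graph is injective. -/
def InjGraph (f : Set (Ordinal × Ordinal)) : Prop :=
  ∀ {x x' y}, (x, y) ∈ f → (x', y) ∈ f → x = x'

/-- The graph is a partial function from `T` to `T`. -/
def Carr (T : SFT) (f : Set (Ordinal × Ordinal)) : Prop :=
  ∀ p ∈ f, p.1 ∈ T.elems ∧ p.2 ∈ T.elems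

/-- Strictly increasing. -/
def StrictIncr (T : SFT) (f : Set (Ordinal × Ordinal)) : Prop :=
  ∀ {x y x' y'}, (x, y) ∈ f → (x', y') ∈ f → T.lt x x' → T.lt y y'

/-- Level preserving. -/
def LevelPres (f : Set (Ordinal × Ordinal)) : Prop :=
  ∀ p ∈ f, ht p.1 = ht p.2

/-- Downwards closed (the domain is closed under drop-downs). -/
def DownClosedDom (T : SFT) (f : Set (Ordinal × Ordinal)) : Prop :=
  ∀ x y, (x, y) ∈ f → ∀ β ∈ T.heights, β < ht x →
    ∃ x' y', x' ∈ T.elems ∧ ht x' = β ∧ T.lt x' x ∧ (x', y') ∈ f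

/-- No fixed points other than 0. -/
def NoFix (f : Set (Ordinal × Ordinal)) : Prop := ∀ x, (x, x) ∈ f → x = 0

/-- `f` is a standard function on `T`. -/
def IsStdFun (T : SFT) (f : Set (Ordinal × Ordinal)) : Prop :=
  Carr T f ∧ FuncGraph f ∧ InjGraph f ∧ StrictIncr T f ∧ LevelPres f ∧
    DownClosedDom T f ∧ NoFix f

/-- `f^m(x) = y`, for `m ∈ {-1, 1}`. -/
def appPow (f : Set (Ordinal × Ordinal)) (m : ℤ) (x y : Ordinal) : Prop :=
  (m = 1 ∧ (x, y) ∈ f) ∨ (m = -1 ∧ (y, x) ∈ f)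

/-- `X↾α` and `X` are `f`-consistent. -/
def Consistent (T : SFT) (f : Set (Ordinal × Ordinal)) (α : Ordinal) (X : Set Ordinal) : Prop :=
  ∀ x ∈ X, ∀ y ∈ X, ((T.drop α x, T.drop α y) ∈ f ↔ (x, y) ∈ f)

/-- The family `{F τ : τ ∈ A}` is separated on the tuple `a 0, ..., a (n-1)`. -/
def SepOnTuple (F : Ordinal → Set (Ordinal × Ordinal)) (A : Finset Ordinal)
    (n : ℕ) (a : ℕ → Ordinal) : Prop :=
  ∀ i < n, ∀ j₀ < i, ∀ j₁ < i, ∀ m₀ m₁ : ℤ, ∀ τ₀ ∈ A, ∀ τ₁ ∈ A,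
    (m₀ = 1 ∨ m₀ = -1) → (m₁ = 1 ∨ m₁ = -1) →
    appPow (F τ₀) m₀ (a i) (a j₀) → appPow (F τ₁) m₁ (a i) (a j₁) →
    j₀ = j₁ ∧ m₀ = m₁ ∧ τ₀ = τ₁

/-- The family is separated on the set `X`. -/
def SepOnSet (F : Ordinal → Set (Ordinal × Ordinal)) (A : Finset Ordinal)
    (X : Set Ordinal) : Prop :=
  ∃ (n : ℕ) (a : ℕ → Ordinal), (∀ i < n, ∀ j < n, a i = a j → i = j) ∧
    X = a '' {i | i < n} ∧ SepOnTuple F A n a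

/-- The family is `ρ`-separated on the tuple `a 0, ..., a (n-1)` (of elements of level `α`). -/
def RhoSepOnTuple (ρ : Ordinal → Ordinal → Ordinal) (F : Ordinal → Set (Ordinal × Ordinal))
    (A : Finset Ordinal) (α : Ordinal) (n : ℕ) (a : ℕ → Ordinal) : Prop :=
  ∀ i < n, ∀ j₀ < i, ∀ j₁ < i, ∀ m₀ m₁ : ℤ, ∀ τ₀ ∈ A, ∀ τ₁ ∈ A,
    (m₀ = 1 ∨ m₀ = -1) → (m₁ = 1 ∨ m₁ = -1) →
    appPow (F τ₀) m₀ (a i) (a j₀) → appPow (F τ₁) m₁ (a i) (a j₁) →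
    j₀ = j₁ ∧ ((m₀ = m₁ ∧ τ₀ = τ₁) ∨ α ≤ ρ τ₀ τ₁)

/-- The family is `ρ`-separated on the set `X ⊆ T_α`. -/
def RhoSepOnSet (ρ : Ordinal → Ordinal → Ordinal) (F : Ordinal → Set (Ordinal × Ordinal))
    (A : Finset Ordinal) (α : Ordinal) (X : Set Ordinal) : Prop :=
  ∃ (n : ℕ) (a : ℕ → Ordinal), (∀ i < n, ∀ j < n, a i = a j → i = j) ∧
    X = a '' {i | i < n} ∧ RhoSepOnTuple ρ F A α n a

/-- There is a loop in `X` with respect to the family `{F τ : τ ∈ A}`. -/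
def HasLoop (F : Ordinal → Set (Ordinal × Ordinal)) (A : Finset Ordinal)
    (X : Set Ordinal) : Prop :=
  ∃ p : ℕ, 4 ≤ p ∧ ∃ c : ℕ → Ordinal,
    (∀ i < p, c i ∈ X) ∧
    (∀ i < p - 1, ∀ j < p - 1, c i = c j → i = j) ∧
    c 0 = c (p - 1) ∧
    (∀ i < p - 1, ∃ τ ∈ A, ∃ m : ℤ, (m = 1 ∨ m = -1) ∧ appPow (F τ) m (c i) (c (i + 1)))

/-- `p` is a member of `T ⊗ T`. -/
def InOtimes (T : SFT) (p : Ordinal × Ordinal) : Prop :=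
  p.1 ∈ T.elems ∧ p.2 ∈ T.elems ∧ ht p.1 = ht p.2

/-- `f ⊆ T ⊗ T` is downwards closed as a subset of `T ⊗ T`. -/
def DCPairs (T : SFT) (f : Set (Ordinal × Ordinal)) : Prop :=
  ∀ p ∈ f, ∀ q, InOtimes T q → T.le q.1 p.1 → T.le q.2 p.2 → q ∈ f

/-- The downward closure of `f` in `U`. -/
def dcl (U : SFT) (f : Set (Ordinal × Ordinal)) : Set (Ordinal × Ordinal) :=
  {p | InOtimes U p ∧ ∃ q ∈ f, U.le p.1 q.1 ∧ U.le p.2 q.2}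

end AKST


namespace AKST
namespace SFT

lemma ht_zero' : ht 0 = 0 := Ordinal.zero_div _

lemma eq_zero_of_ht_eq_zero (T : SFT) {x : Ordinal} (hx : x ∈ T.elems) (h : ht x = 0) :
    x = 0 := by
  rcases T.mem_ok x hx with h0 | ⟨hw, _⟩
  · exact h0
  · exfalso
    have : (0 : Ordinal) < x / Ordinal.omega0 :=
      (Ordinal.div_pos Ordinal.omega0_ne_zero).2 hw
    rw [show x / Ordinal.omega0 = ht x from rfl, h] at this
    exact lt_irrefl _ this

lemma zero_lt' (T : SFT) {x : Ordinal} (hx : x ∈ T.elems) (hne : x ≠ 0) : T.lt 0 x := by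
  have hht : ht x ≠ 0 := fun h => hne (eq_zero_of_ht_eq_zero T hx h)
  obtain ⟨y, hy, hy0, hlt⟩ := T.pred_level x hx 0 ⟨0, T.zero_mem, ht_zero'⟩
    (pos_iff_ne_zero.2 hht)
  have : y = 0 := eq_zero_of_ht_eq_zero T hy hy0
  exact this ▸ hlt

lemma zero_le' (T : SFT) {x : Ordinal} (hx : x ∈ T.elems) : T.le 0 x := by
  by_cases h : x = 0
  · exact Or.inr ⟨h.symm, T.zero_mem⟩
  · exact Or.inl (zero_lt' T hx h)

lemma le_mem_left' (T : SFT) {x y : Ordinal} (h : T.le x y) : x ∈ T.elems := by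
  rcases h with h | ⟨_, hm⟩
  · exact (T.lt_mem h).1
  · exact hm

lemma le_antisymm' (T : SFT) {x y : Ordinal} (h1 : T.le x y) (h2 : T.le y x) : x = y := by
  rcases h1 with h1 | ⟨e, _⟩
  · rcases h2 with h2 | ⟨e, _⟩
    · exact absurd (T.lt_trans' h1 h2) (T.lt_irrefl' x)
    · exact e.symm
  · exact e

lemma isMeet_unique (T : SFT) {a b z z' : Ordinal} (h1 : T.isMeet a b z)
    (h2 : T.isMeet a b z') : z = z' :=
  le_antisymm' T (h2.2.2 z h1.1 h1.2.1) (h1.2.2 z' h2.1 h2.2.1)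

lemma meet_eq' (T : SFT) {a b z : Ordinal} (h : T.isMeet a b z) : T.meet a b = z := by
  have hex : ∃ z, T.isMeet a b z := ⟨z, h⟩
  rw [meet, dif_pos hex]
  exact isMeet_unique T hex.choose_spec h

lemma exists_isMeet (T : SFT) {a b : Ordinal} (ha : a ∈ T.elems) (hb : b ∈ T.elems) :
    ∃ z, T.isMeet a b z := by
  classical
  set S := T.elems.filter (fun w => T.le w a ∧ T.le w b) with hS
  have h0 : (0 : Ordinal) ∈ S := Finset.mem_filter.2 ⟨T.zero_mem, zero_le' T ha, zero_le' T hb⟩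
  obtain ⟨z, hzS, hmaxz⟩ := S.exists_max_image ht ⟨0, h0⟩
  rw [Finset.mem_filter] at hzS
  refine ⟨z, hzS.2.1, hzS.2.2, ?_⟩
  intro w hwa hwb
  have hw : w ∈ S := Finset.mem_filter.2 ⟨le_mem_left' T hwa, hwa, hwb⟩
  have hht := hmaxz w hw
  rcases hwa with hwa | ⟨rfl, hm⟩
  · rcases hzS.2.1 with hza | ⟨rfl, _⟩
    · rcases T.pred_linear hwa hza with h | h | h
      · exact Or.inl h
      · exact Or.inr ⟨h, (T.lt_mem hwa).1⟩
      · exact absurd (T.lt_ht h) (not_lt.2 hht)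
    · exact Or.inl hwa
  · rcases hzS.2.1 with hza | ⟨rfl, _⟩
    · exact absurd (T.lt_ht hza) (not_lt.2 hht)
    · exact Or.inr ⟨rfl, hm⟩

lemma lt_reflect {T U : SFT} (hTU : Ext T U) {a b : Ordinal} (ha : a ∈ T.elems)
    (hb : b ∈ T.elems) (h : U.lt a b) : T.lt a b := by
  have hht := U.lt_ht h
  obtain ⟨y, hy, hhy, hlt⟩ := T.pred_level b hb (ht a) ⟨a, ha, rfl⟩ hht
  have hUy : U.lt y b := hTU.2 hlt
  rcases U.pred_linear h hUy with h' | h' | h'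
  · exact absurd (U.lt_ht h') (by rw [hhy]; exact lt_irrefl _)
  · cases h'; exact hlt
  · exact absurd (U.lt_ht h') (by rw [hhy]; exact lt_irrefl _)

lemma le_reflect {T U : SFT} (hTU : Ext T U) {a b : Ordinal} (ha : a ∈ T.elems)
    (hb : b ∈ T.elems) (h : U.le a b) : T.le a b := by
  rcases h with h | ⟨e, _⟩
  · exact Or.inl (lt_reflect hTU ha hb h)
  · exact Or.inr ⟨e, ha⟩

lemma drop_eq' (U : SFT) {w c α : Ordinal} (hw : w ∈ U.elems) (hα : ht w = α)
    (hlt : U.lt w c) : U.drop α c = w := by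
  have hex : ∃ y, y ∈ U.elems ∧ ht y = α ∧ U.lt y c := ⟨w, hw, hα, hlt⟩
  rw [drop, dif_pos hex]
  obtain ⟨hy1, hy2, hy3⟩ := hex.choose_spec
  rcases U.pred_linear hy3 hlt with h | h | h
  · exact absurd (U.lt_ht h) (by rw [hy2, hα]; exact lt_irrefl _)
  · exact h
  · exact absurd (U.lt_ht h) (by rw [hy2, hα]; exact lt_irrefl _)

lemma heights_bddAbove (T : SFT) : BddAbove T.heights := by
  have hsub : T.heights ⊆ ht '' ↑T.elems := by
    rintro α ⟨-, x, hx, he⟩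
    exact ⟨x, hx, he⟩
  exact ((T.elems.finite_toSet.image ht).subset hsub).bddAbove

end SFT
end AKST

open AKST AKST.SFT

/-- If `U` is a simple extension of `T`, then meets of elements of `T`
computed in `T` and in `U` coincide. -/
theorem stmt_2 (T U : SFT) (h : SimpleExt U T) :
    ∀ a ∈ T.elems, ∀ b ∈ T.elems, T.meet a b = U.meet a b := by
  obtain ⟨hext, hnew, huniq⟩ := h
  intro a ha b hb
  obtain ⟨z, hz⟩ := exists_isMeet T ha hb
  rw [meet_eq' T hz]
  symm
  apply meet_eq' U
  have haU : a ∈ U.elems := hext.1 ha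
  have hbU : b ∈ U.elems := hext.1 hb
  have hle_lift : ∀ {x y : Ordinal}, T.le x y → U.le x y := by
    rintro x y (hxy | ⟨rfl, hm⟩)
    · exact Or.inl (hext.2 hxy)
    · exact Or.inr ⟨rfl, hext.1 hm⟩
  refine ⟨hle_lift hz.1, hle_lift hz.2.1, ?_⟩
  intro w hwa hwb
  have hwU : w ∈ U.elems := le_mem_left' U hwa
  by_cases hwT : w ∈ T.elems
  · exact hle_lift (hz.2.2 w (le_reflect hext hwT ha hwa) (le_reflect hext hwT hb hwb))
  · have hw0 : w ≠ 0 := fun e => hwT (e ▸ T.zero_mem)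
    have hwa' : U.lt w a := hwa.resolve_right (fun hh => hwT (hh.1 ▸ ha))
    have hwb' : U.lt w b := hwb.resolve_right (fun hh => hwT (hh.1 ▸ hb))
    have hαne : ht w ≠ 0 := fun e => hw0 (eq_zero_of_ht_eq_zero U hwU e)
    have hαU : ht w ∈ U.heights := ⟨hαne, w, hwU, rfl⟩
    have hαT : ht w ∉ T.heights := hnew w hwU hwT
    have hαa : ht w < ht a := U.lt_ht hwa'
    have hαb : ht w < ht b := U.lt_ht hwb'
    have hhta : ht a ∈ T.heights := ⟨fun e => not_lt.2 (zero_le (a := ht w)) (e ▸ hαa), a, ha, rfl⟩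
    have hhtb : ht b ∈ T.heights := ⟨fun e => not_lt.2 (zero_le (a := ht w)) (e ▸ hαb), b, hb, rfl⟩
    have hmaxh : ht w < T.maxHeight :=
      lt_of_lt_of_le hαa (le_csSup (heights_bddAbove T) hhta)
    have hUD := huniq (ht w) hαU hαT hmaxh
    have hSne : {β | β ∈ T.heights ∧ ht w < β}.Nonempty := ⟨ht a, hhta, hαa⟩
    have hmin : T.minAbove (ht w) ∈ {β | β ∈ T.heights ∧ ht w < β} := by
      rw [SFT.minAbove]; exact csInf_mem hSne
    have hβa : T.minAbove (ht w) ≤ ht a := by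
      rw [SFT.minAbove]; exact csInf_le (OrderBot.bddBelow _) ⟨hhta, hαa⟩
    have hβb : T.minAbove (ht w) ≤ ht b := by
      rw [SFT.minAbove]; exact csInf_le (OrderBot.bddBelow _) ⟨hhtb, hαb⟩
    have key : ∀ x, x ∈ T.elems → U.lt w x → T.minAbove (ht w) ≤ ht x →
        ∃ x', x' ∈ T.level (T.minAbove (ht w)) ∧ T.le x' x ∧ U.lt w x' := by
      intro x hxT hwx hβx
      rcases eq_or_lt_of_le hβx with he | hl
      · exact ⟨x, ⟨hxT, he.symm⟩, Or.inr ⟨rfl, hxT⟩, hwx⟩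
      · obtain ⟨y, hy, hhy, hlt⟩ := T.pred_level x hxT (T.minAbove (ht w)) hmin.1.2 hl
        refine ⟨y, ⟨hy, hhy⟩, Or.inl hlt, ?_⟩
        have hUyx : U.lt y x := hext.2 hlt
        rcases U.pred_linear hwx hUyx with h' | h' | h'
        · exact h'
        · exfalso
          have h2 : ht w < ht y := hmin.2.trans_eq hhy.symm
          rw [h'] at h2
          exact lt_irrefl _ h2
        · exfalso
          have h2 := U.lt_ht h'
          rw [hhy] at h2
          exact absurd hmin.2 (lt_asymm h2)
    obtain ⟨a', ha'lvl, ha'le, hwa''⟩ := key a ha hwa' hβa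
    obtain ⟨b', hb'lvl, hb'le, hwb''⟩ := key b hb hwb' hβb
    have hdrop_a : U.drop (ht w) a' = w := drop_eq' U hwU rfl hwa''
    have hdrop_b : U.drop (ht w) b' = w := drop_eq' U hwU rfl hwb''
    have hab : a' = b' := hUD a' ha'lvl b' hb'lvl (hdrop_a.trans hdrop_b.symm)
    have hc : T.le a' z := hz.2.2 a' ha'le (hab ▸ hb'le)
    rcases hle_lift hc with h' | ⟨e, _⟩
    · exact Or.inl (U.lt_trans' hwa'' h')
    · exact Or.inl (e ▸ hwa'')
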